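/- Let G be a finite nilpotent AC-group of nilpotency class greater than 2. Then for all x, x' ∈ Z₂(G) \ Z(G), C_G(x) = C_G(x'); moreover this common centralizer is the unique normal member of the set {C_G(y) : y ∈ G \ Z(G)}, is a characteristic subgroup of G, and has maximal order among all centralizers of non-central elements. -/

import Mathlib

open Subgroup

section Helpers

variable {G : Type*} [Group G]

/-- The commutator-with-`w` map into the center, when `w` is in the second center. -/
private def zetaHom {w : G} (hw : ∀ g : G, w * g * w⁻¹ * g⁻¹ ∈ center G) :
    G →* ↥(center G) where
  toFun g := ⟨w * g * w⁻¹ * g⁻¹, hw g⟩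
  map_one' := by ext; simp
  map_mul' g h := by
    ext
    show w * (g * h) * w⁻¹ * (g * h)⁻¹ = (w * g * w⁻¹ * g⁻¹) * (w * h * w⁻¹ * h⁻¹)
    have hc : g⁻¹ * (w * h * w⁻¹ * h⁻¹) = (w * h * w⁻¹ * h⁻¹) * g⁻¹ :=
      Subgroup.mem_center_iff.mp (hw h) g⁻¹
    have h1 : w * (g * h) * w⁻¹ * (g * h)⁻¹
        = (w * g * w⁻¹) * ((w * h * w⁻¹ * h⁻¹) * g⁻¹) := by group
    rw [h1, ← hc]
    group

open commutatorElement in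
/-- Commutators commute with second-center elements. -/
private lemma comm_with_commutator {w : G}
    (hw : ∀ g : G, w * g * w⁻¹ * g⁻¹ ∈ center G) (a b : G) :
    w * (a * b * a⁻¹ * b⁻¹) = (a * b * a⁻¹ * b⁻¹) * w := by
  have hz : (zetaHom hw) ⁅a, b⁆ = 1 := by
    rw [map_commutatorElement]
    refine commutatorElement_eq_one_iff_commute.mpr (Subtype.ext ?_)
    push_cast
    exact Subgroup.mem_center_iff.mp (hw b) _
  have hz' : w * ⁅a, b⁆ * w⁻¹ * ⁅a, b⁆⁻¹ = 1 := congrArg Subtype.val hz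
  rw [commutatorElement_def] at hz'
  calc w * (a * b * a⁻¹ * b⁻¹)
      = (w * (a * b * a⁻¹ * b⁻¹) * w⁻¹ * (a * b * a⁻¹ * b⁻¹)⁻¹)
          * ((a * b * a⁻¹ * b⁻¹) * w) := by group
    _ = (a * b * a⁻¹ * b⁻¹) * w := by rw [hz']; group

end Helpers

theorem stmt13 (G : Type*) [Group G] [Finite G]
    (hAC : ∀ x : G, x ∉ center G → ∀ a ∈ centralizer {x}, ∀ b ∈ centralizer {x}, a * b = b * a)
    (hnil : Group.IsNilpotent G) (hclass : 2 < Group.nilpotencyClass G)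
    (x : G) (hx2 : x ∈ _root_.upperCentralSeries G 2) (hx : x ∉ center G) :
    (∀ x' : G, x' ∈ _root_.upperCentralSeries G 2 → x' ∉ center G →
        (centralizer {x} : Subgroup G) = centralizer {x'}) ∧
    (centralizer {x} : Subgroup G).Normal ∧
    (∀ y : G, y ∉ center G → (centralizer {y} : Subgroup G).Normal →
        (centralizer {y} : Subgroup G) = centralizer {x}) ∧
    (centralizer {x} : Subgroup G).Characteristic ∧
    (∀ y : G, y ∉ center G →
        Nat.card (centralizer {y} : Subgroup G) ≤ Nat.card (centralizer {x} : Subgroup G)) := by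
  classical
  -- zeta property of second-center elements
  have hzeta : ∀ w : G, w ∈ Subgroup.upperCentralSeries G 2 →
      ∀ g : G, w * g * w⁻¹ * g⁻¹ ∈ center G := by
    intro w hw g
    have hw' : w ∈ Subgroup.upperCentralSeries G (1 + 1) := hw
    have := Subgroup.mem_upperCentralSeries_succ_iff.mp hw' g
    rwa [Subgroup.upperCentralSeries_one] at this
  have hxz : ∀ g : G, x * g * x⁻¹ * g⁻¹ ∈ center G := hzeta x hx2
  -- CT merging
  have ctEq : ∀ u v : G, u ∉ center G → v ∉ center G → u * v = v * u →
      (centralizer {u} : Subgroup G) = centralizer {v} := by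
    intro u v hu hv huv
    have hvu : v ∈ (centralizer {u} : Subgroup G) :=
      mem_centralizer_singleton_iff.mpr huv.symm
    have huv' : u ∈ (centralizer {v} : Subgroup G) :=
      mem_centralizer_singleton_iff.mpr huv
    ext g
    simp only [mem_centralizer_singleton_iff]
    constructor
    · intro hg
      exact hAC u hu g (mem_centralizer_singleton_iff.mpr hg) v hvu
    · intro hg
      exact hAC v hv g (mem_centralizer_singleton_iff.mpr hg) u huv'
  -- existence of a noncentral commutator
  have hc0 : ∃ a b : G, a * b * a⁻¹ * b⁻¹ ∉ center G := by
    by_contra hcon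
    push_neg at hcon
    have htop : Subgroup.upperCentralSeries G 2 = ⊤ := by
      rw [eq_top_iff']
      intro g
      have : g ∈ Subgroup.upperCentralSeries G (1 + 1) := by
        rw [Subgroup.mem_upperCentralSeries_succ_iff]
        intro h
        rw [Subgroup.upperCentralSeries_one]
        exact hcon g h
      exact this
    have := Subgroup.upperCentralSeries_eq_top_iff_nilpotencyClass_le.mp htop
    omega
  obtain ⟨a₀, b₀, hc₀⟩ := hc0
  -- part 1
  have hpart1 : ∀ w : G, w ∈ Subgroup.upperCentralSeries G 2 → w ∉ center G →
      (centralizer {w} : Subgroup G) = centralizer {a₀ * b₀ * a₀⁻¹ * b₀⁻¹} := by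
    intro w hw2 hwZ
    exact ctEq w _ hwZ hc₀ (comm_with_commutator (hzeta w hw2) a₀ b₀)
  have hMx : ∀ w : G, w ∈ Subgroup.upperCentralSeries G 2 → w ∉ center G →
      (centralizer {w} : Subgroup G) = centralizer {x} :=
    fun w h1 h2 => (hpart1 w h1 h2).trans (hpart1 x hx2 hx).symm
  -- part 2 : normality
  have hnormal : (centralizer {x} : Subgroup G).Normal := by
    constructor
    intro n hn g
    have hnx : n * x = x * n := mem_centralizer_singleton_iff.mp hn
    rw [mem_centralizer_singleton_iff]
    have hz := hxz g
    have commxn : x * n * x⁻¹ = n := by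
      rw [show x * n = n * x from hnx.symm]; group
    have key : x * (g * n * g⁻¹) * x⁻¹ = g * n * g⁻¹ := by
      calc x * (g * n * g⁻¹) * x⁻¹
          = (x * g * x⁻¹) * (x * n * x⁻¹) * (x * g * x⁻¹)⁻¹ := by group
        _ = (x * g * x⁻¹) * n * (x * g * x⁻¹)⁻¹ := by rw [commxn]
        _ = (x * g * x⁻¹ * g⁻¹) * (g * n * g⁻¹) * (x * g * x⁻¹ * g⁻¹)⁻¹ := by group
        _ = (g * n * g⁻¹) * (x * g * x⁻¹ * g⁻¹) * (x * g * x⁻¹ * g⁻¹)⁻¹ := by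
              rw [Subgroup.mem_center_iff.mp hz (g * n * g⁻¹)]
        _ = g * n * g⁻¹ := by group
    calc (g * n * g⁻¹) * x = (x * (g * n * g⁻¹) * x⁻¹) * x := by rw [key]
      _ = x * (g * n * g⁻¹) := by group
  -- finding a second-center, noncentral element in a noncentral normal subgroup
  have hfind : ∀ n : ℕ, ∀ N : Subgroup G, N.Normal → N ≤ Subgroup.upperCentralSeries G n →
      ¬(N ≤ center G) → ∃ w, w ∈ N ∧ w ∈ Subgroup.upperCentralSeries G 2 ∧ w ∉ center G := by
    intro n
    induction n with
    | zero =>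
        intro N _ hle hnc
        exact absurd (hle.trans (by rw [Subgroup.upperCentralSeries_zero]; exact bot_le)) hnc
    | succ n ih =>
        intro N hN hle hnc
        by_cases hc : N ⊓ Subgroup.upperCentralSeries G n ≤ center G
        · have hN2 : N ≤ Subgroup.upperCentralSeries G 2 := by
            intro g hg
            have hg2 : g ∈ Subgroup.upperCentralSeries G (1 + 1) := by
              rw [Subgroup.mem_upperCentralSeries_succ_iff]
              intro h
              rw [Subgroup.upperCentralSeries_one]
              refine hc (mem_inf.mpr ⟨?_, ?_⟩)
              · have h1 : h * g⁻¹ * h⁻¹ ∈ N := hN.conj_mem g⁻¹ (inv_mem hg) h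
                have h2 : g * (h * g⁻¹ * h⁻¹) ∈ N := mul_mem hg h1
                have h3 : g * (h * g⁻¹ * h⁻¹) = g * h * g⁻¹ * h⁻¹ := by group
                rwa [h3] at h2
              · exact Subgroup.mem_upperCentralSeries_succ_iff.mp (hle hg) h
            exact hg2
          obtain ⟨w, hwN, hwZ⟩ := SetLike.not_le_iff_exists.mp hnc
          exact ⟨w, hwN, hN2 hwN, hwZ⟩
        · haveI := hN
          obtain ⟨w, hwN, hw2, hwZ⟩ :=
            ih (N ⊓ Subgroup.upperCentralSeries G n) inferInstance inf_le_right hc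
          exact ⟨w, (mem_inf.mp hwN).1, hw2, hwZ⟩
  -- part 3
  have hpart3 : ∀ y : G, y ∉ center G → (centralizer {y} : Subgroup G).Normal →
      (centralizer {y} : Subgroup G) = centralizer {x} := by
    intro y hy hynorm
    have hnc : ¬(centralizer {y} : Subgroup G) ≤ center G := by
      intro hle
      exact hy (hle (mem_centralizer_singleton_iff.mpr rfl))
    obtain ⟨w, hwC, hw2, hwZ⟩ := hfind (Group.nilpotencyClass G) (centralizer {y}) hynorm
      (by rw [Subgroup.upperCentralSeries_nilpotencyClass]; exact le_top) hnc
    have h1 : (centralizer {y} : Subgroup G) = centralizer {w} :=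
      ctEq y w hy hwZ (mem_centralizer_singleton_iff.mp hwC).symm
    rw [h1]
    exact hMx w hw2 hwZ
  -- center is mapped to center by automorphisms
  have hcenmap : ∀ (ϕ : G ≃* G) (z : G), z ∈ center G → ϕ z ∈ center G := by
    intro ϕ z hz
    rw [Subgroup.mem_center_iff]
    intro g
    have h1 : ϕ.symm g * z = z * ϕ.symm g := Subgroup.mem_center_iff.mp hz (ϕ.symm g)
    have := congrArg ϕ h1
    simpa [map_mul] using this
  -- part 4
  have hpart4 : (centralizer {x} : Subgroup G).Characteristic := by
    rw [characteristic_iff_comap_eq]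
    intro ϕ
    have hx1 : ϕ.symm x ∈ Subgroup.upperCentralSeries G 2 := by
      have h2 : ϕ.symm x ∈ Subgroup.upperCentralSeries G (1 + 1) := by
        rw [Subgroup.mem_upperCentralSeries_succ_iff]
        intro h
        rw [Subgroup.upperCentralSeries_one]
        have := hcenmap ϕ.symm _ (hxz (ϕ h))
        simpa [map_mul, map_inv, commutatorElement_def] using this
      exact h2
    have hx1Z : ϕ.symm x ∉ center G := by
      intro h
      have := hcenmap ϕ _ h
      rw [MulEquiv.apply_symm_apply] at this
      exact hx this
    have hcomap : (centralizer {x} : Subgroup G).comap ϕ.toMonoidHom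
        = centralizer {ϕ.symm x} := by
      ext g
      rw [mem_comap]
      simp only [mem_centralizer_singleton_iff]
      constructor
      · intro h
        apply ϕ.injective
        simpa [map_mul, MulEquiv.apply_symm_apply] using h
      · intro h
        have := congrArg ϕ h
        simpa [map_mul, MulEquiv.apply_symm_apply] using this
    rw [hcomap]
    exact hMx (ϕ.symm x) hx1 hx1Z
  -- part 5
  have hpart5 : ∀ y : G, y ∉ center G →
      Nat.card (centralizer {y} : Subgroup G) ≤ Nat.card (centralizer {x} : Subgroup G) := by
    intro y hy
    by_cases hyM : (centralizer {y} : Subgroup G) = centralizer {x}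
    · rw [hyM]
    · -- the intersection of the two centralizers is the center
      have hAM : ∀ c : G, c ∈ centralizer {y} → c ∈ centralizer {x} → c ∈ center G := by
        intro c hcy hcx
        by_contra hcZ
        exact hyM ((ctEq y c hy hcZ (mem_centralizer_singleton_iff.mp hcy).symm).trans
          (ctEq x c hx hcZ (mem_centralizer_singleton_iff.mp hcx).symm).symm)
      -- the key commutator trick
      have hL5 : ∀ t c : G, c ∈ centralizer {y} → c ∉ center G →
          c * t * c⁻¹ * t⁻¹ ∈ center G → t * y * t⁻¹ * y⁻¹ ∈ center G := by
        intro t c hcA hcZ hz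
        have hdM : t * y * t⁻¹ * y⁻¹ ∈ (centralizer {x} : Subgroup G) :=
          mem_centralizer_singleton_iff.mpr (comm_with_commutator hxz t y).symm
        have hcy' : c * y = y * c := mem_centralizer_singleton_iff.mp hcA
        have e1 : c * t * c⁻¹ = (c * t * c⁻¹ * t⁻¹) * t := by group
        have e2 : c * y * c⁻¹ = y := by rw [hcy']; group
        have key : c * (t * y * t⁻¹ * y⁻¹) * c⁻¹ = t * y * t⁻¹ * y⁻¹ := by
          calc c * (t * y * t⁻¹ * y⁻¹) * c⁻¹
              = (c * t * c⁻¹) * (c * y * c⁻¹) * (c * t * c⁻¹)⁻¹ * (c * y * c⁻¹)⁻¹ := by group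
            _ = (c * t * c⁻¹ * t⁻¹) * (t * y * t⁻¹) * (c * t * c⁻¹ * t⁻¹)⁻¹ * y⁻¹ := by
                  rw [e2]; group
            _ = (t * y * t⁻¹) * (c * t * c⁻¹ * t⁻¹) * (c * t * c⁻¹ * t⁻¹)⁻¹ * y⁻¹ := by
                  rw [Subgroup.mem_center_iff.mp hz (t * y * t⁻¹)]
            _ = t * y * t⁻¹ * y⁻¹ := by group
        by_contra hdZ
        have hCd : (centralizer {t * y * t⁻¹ * y⁻¹} : Subgroup G) = centralizer {x} :=
          ctEq _ x hdZ hx (mem_centralizer_singleton_iff.mp hdM)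
        have hcd : c ∈ (centralizer {t * y * t⁻¹ * y⁻¹} : Subgroup G) := by
          rw [mem_centralizer_singleton_iff]
          calc c * (t * y * t⁻¹ * y⁻¹) = (c * (t * y * t⁻¹ * y⁻¹) * c⁻¹) * c := by group
            _ = (t * y * t⁻¹ * y⁻¹) * c := by rw [key]
        rw [hCd] at hcd
        exact hcZ (hAM c hcA hcd)
      -- choice of t
      have hT : ∃ t : G, ∀ c : G, c ∈ centralizer {y} → c ∉ center G →
          c * t * c⁻¹ * t⁻¹ ∉ center G := by
        by_contra hcon
        push_neg at hcon
        have hy2 : y ∈ Subgroup.upperCentralSeries G 2 := by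
          have h2 : y ∈ Subgroup.upperCentralSeries G (1 + 1) := by
            rw [Subgroup.mem_upperCentralSeries_succ_iff]
            intro h
            rw [Subgroup.upperCentralSeries_one]
            obtain ⟨c, hc1, hc2, hc3⟩ := hcon h
            have hd := hL5 h c hc1 hc2 hc3
            have hinv : y * h * y⁻¹ * h⁻¹ = (h * y * h⁻¹ * y⁻¹)⁻¹ := by group
            rw [commutatorElement_def, hinv]
            exact inv_mem hd
          exact h2
        exact hyM (hMx y hy2 hy)
      obtain ⟨t, ht⟩ := hT
      -- counting
      have hZA : center G ≤ (centralizer {y} : Subgroup G) := fun z hz =>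
        mem_centralizer_singleton_iff.mpr (Subgroup.mem_center_iff.mp hz y).symm
      have hZM : center G ≤ (centralizer {x} : Subgroup G) := fun z hz =>
        mem_centralizer_singleton_iff.mpr (Subgroup.mem_center_iff.mp hz x).symm
      set A : Subgroup G := centralizer {y} with hAdef
      set M : Subgroup G := centralizer {x} with hMdef
      set ZA : Subgroup ↥A := (center G).subgroupOf A with hZAdef
      set ZM : Subgroup ↥M := (center G).subgroupOf M with hZMdef
      have hmem : ∀ c : ↥A, t⁻¹ * (c : G) * t * (c : G)⁻¹ ∈ M := by
        intro c
        have h1 := comm_with_commutator hxz t⁻¹ (c : G)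
        rw [inv_inv] at h1
        exact mem_centralizer_singleton_iff.mpr h1.symm
      set f : ↥A → (↥M ⧸ ZM) :=
        fun c => QuotientGroup.mk ⟨t⁻¹ * (c : G) * t * (c : G)⁻¹, hmem c⟩ with hfdef
      have hresp : ∀ c c' : ↥A, (QuotientGroup.leftRel ZA) c c' → f c = f c' := by
        intro c c' hrel
        rw [QuotientGroup.leftRel_apply] at hrel
        have he : ((c⁻¹ * c' : ↥A) : G) ∈ center G := mem_subgroupOf.mp hrel
        have he' : (c : G)⁻¹ * (c' : G) ∈ center G := by
          simpa using he
        have hsw : t * ((c : G)⁻¹ * (c' : G)) = ((c : G)⁻¹ * (c' : G)) * t :=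
          Subgroup.mem_center_iff.mp he' t
        have hval : t⁻¹ * (c' : G) * t * (c' : G)⁻¹ = t⁻¹ * (c : G) * t * (c : G)⁻¹ := by
          calc t⁻¹ * (c' : G) * t * (c' : G)⁻¹
              = t⁻¹ * (c : G) * (((c : G)⁻¹ * (c' : G)) * t) * (c' : G)⁻¹ := by group
            _ = t⁻¹ * (c : G) * (t * ((c : G)⁻¹ * (c' : G))) * (c' : G)⁻¹ := by rw [hsw]
            _ = t⁻¹ * (c : G) * t * (c : G)⁻¹ := by group
        show QuotientGroup.mk _ = QuotientGroup.mk _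
        exact congrArg QuotientGroup.mk (Subtype.ext hval.symm)
      set fbar : (↥A ⧸ ZA) → (↥M ⧸ ZM) := Quotient.lift f hresp with hfbardef
      have hinj : Function.Injective fbar := by
        intro q q'
        obtain ⟨c, rfl⟩ := QuotientGroup.mk_surjective q
        obtain ⟨c', rfl⟩ := QuotientGroup.mk_surjective q'
        intro h
        have h' : f c = f c' := h
        have h2 : ((⟨t⁻¹ * (c : G) * t * (c : G)⁻¹, hmem c⟩ : ↥M))⁻¹
            * (⟨t⁻¹ * (c' : G) * t * (c' : G)⁻¹, hmem c'⟩ : ↥M) ∈ ZM :=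
          QuotientGroup.eq.mp h'
        have h3 : (t⁻¹ * (c : G) * t * (c : G)⁻¹)⁻¹ * (t⁻¹ * (c' : G) * t * (c' : G)⁻¹)
            ∈ center G := by
          have := mem_subgroupOf.mp h2
          simpa using this
        have hfree : (t⁻¹ * (c : G) * t * (c : G)⁻¹)⁻¹ * (t⁻¹ * (c' : G) * t * (c' : G)⁻¹)
            = (c : G) * (t⁻¹ * ((c : G)⁻¹ * (c' : G)) * t * ((c : G)⁻¹ * (c' : G))⁻¹)
              * (c : G)⁻¹ := by group
        rw [hfree] at h3
        -- peel the conjugation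
        have h5 := Subgroup.mem_center_iff.mp h3 ((c : G)⁻¹)
        have h4 : t⁻¹ * ((c : G)⁻¹ * (c' : G)) * t * ((c : G)⁻¹ * (c' : G))⁻¹
            = (c : G) * (t⁻¹ * ((c : G)⁻¹ * (c' : G)) * t * ((c : G)⁻¹ * (c' : G))⁻¹)
              * (c : G)⁻¹ := by
          set w := t⁻¹ * ((c : G)⁻¹ * (c' : G)) * t * ((c : G)⁻¹ * (c' : G))⁻¹ with hwdef
          calc w = (c : G)⁻¹ * ((c : G) * w * (c : G)⁻¹) * (c : G) := by group
            _ = ((c : G) * w * (c : G)⁻¹) * (c : G)⁻¹ * (c : G) := by rw [h5]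
            _ = (c : G) * w * (c : G)⁻¹ := by group
        rw [← h4] at h3
        -- so t⁻¹ e t e⁻¹ is central, where e = c⁻¹ c'
        have heA : (c : G)⁻¹ * (c' : G) ∈ A := by
          exact mul_mem (inv_mem c.2) c'.2
        have heZ : (c : G)⁻¹ * (c' : G) ∈ center G := by
          by_contra heZ'
          have h6 : ((c : G)⁻¹ * (c' : G)) * t * ((c : G)⁻¹ * (c' : G))⁻¹ * t⁻¹
              ∈ center G := by
            have h7 : ((c : G)⁻¹ * (c' : G)) * t * ((c : G)⁻¹ * (c' : G))⁻¹ * t⁻¹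
                = t * (t⁻¹ * ((c : G)⁻¹ * (c' : G)) * t * ((c : G)⁻¹ * (c' : G))⁻¹) * t⁻¹ := by
              group
            have h9 : t * (t⁻¹ * ((c : G)⁻¹ * (c' : G)) * t * ((c : G)⁻¹ * (c' : G))⁻¹) * t⁻¹
                = t⁻¹ * ((c : G)⁻¹ * (c' : G)) * t * ((c : G)⁻¹ * (c' : G))⁻¹ := by
              rw [Subgroup.mem_center_iff.mp h3 t, mul_inv_cancel_right]
            rw [h7, h9]
            exact h3
          exact ht _ heA heZ' h6
        exact QuotientGroup.eq.mpr (mem_subgroupOf.mpr (by simpa using heZ))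
      have hcard1 : Nat.card (↥A ⧸ ZA) ≤ Nat.card (↥M ⧸ ZM) :=
        Nat.card_le_card_of_injective fbar hinj
      have hA : Nat.card ↥A = Nat.card (↥A ⧸ ZA) * Nat.card ZA :=
        Subgroup.card_eq_card_quotient_mul_card_subgroup ZA
      have hM : Nat.card ↥M = Nat.card (↥M ⧸ ZM) * Nat.card ZM :=
        Subgroup.card_eq_card_quotient_mul_card_subgroup ZM
      have hZAcard : Nat.card ZA = Nat.card (center G) :=
        Nat.card_congr (Subgroup.subgroupOfEquivOfLe hZA).toEquiv
      have hZMcard : Nat.card ZM = Nat.card (center G) :=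
        Nat.card_congr (Subgroup.subgroupOfEquivOfLe hZM).toEquiv
      calc Nat.card ↥A = Nat.card (↥A ⧸ ZA) * Nat.card ZA := hA
        _ = Nat.card (↥A ⧸ ZA) * Nat.card (center G) := by rw [hZAcard]
        _ ≤ Nat.card (↥M ⧸ ZM) * Nat.card (center G) :=
            Nat.mul_le_mul_right _ hcard1
        _ = Nat.card (↥M ⧸ ZM) * Nat.card ZM := by rw [hZMcard]
        _ = Nat.card ↥M := hM.symm
  exact ⟨fun x' h1 h2 => (hMx x' h1 h2).symm, hnormal, hpart3, hpart4, hpart5⟩
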